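/- For every θ ∈ (0,1) and every set F ⊆ ℝ^d, the Assouad spectrum satisfies \overline{dim}_GB F ≤ dim_A^θ F ≤ min{ \overline{dim}_GB F / (1−θ), dim_qA F }. -/

import Mathlib

open Filter Metric Set Topology Bornology ENNReal

noncomputable section

variable {X : Type*} [PseudoMetricSpace X]

/-- `coveringNumber r E` is the smallest number of closed balls of radius `r`
needed to cover `E` (with value `⊤` if no finite cover exists). -/
def coveringNumber (r : ℝ) (E : Set X) : ℕ∞ :=
  sInf {n : ℕ∞ | ∃ t : Finset X, (E ⊆ ⋃ x ∈ t, closedBall x r) ∧ (t.card : ℕ∞) = n}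

/-- The Assouad spectrum `dim_A^θ F`. -/
def assouadSpectrum (θ : ℝ) (F : Set X) : ℝ :=
  sInf {s : ℝ | 0 ≤ s ∧ ∃ C > (0 : ℝ), ∀ R : ℝ, 0 < R → R < 1 → ∀ x ∈ F,
    (coveringNumber (R ^ (1 / θ)) (closedBall x R ∩ F) : ℝ≥0∞)
      ≤ ENNReal.ofReal (C * (R / R ^ (1 / θ)) ^ s)}

/-- The upper spectrum `\overline{dim}_A^θ F`. -/
def upperSpectrum (θ : ℝ) (F : Set X) : ℝ :=
  sInf {s : ℝ | 0 ≤ s ∧ ∃ C > (0 : ℝ), ∀ r R : ℝ, 0 < r → r ≤ R ^ (1 / θ) →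
    R ^ (1 / θ) < R → R < 1 → 0 < R → ∀ x ∈ F,
    (coveringNumber r (closedBall x R ∩ F) : ℝ≥0∞) ≤ ENNReal.ofReal (C * (R / r) ^ s)}

/-- The generalized upper box dimension `\overline{dim}_{GB} F := limsup_{θ → 0⁺} dim_A^θ F`. -/
def genUpperBoxDim (F : Set X) : ℝ :=
  limsup (fun θ : ℝ => assouadSpectrum θ F) (𝓝[>] (0 : ℝ))

/-- The quasi-Assouad dimension `dim_{qA} F := lim_{θ → 1⁻} \overline{dim}_A^θ F`
(the limit exists by monotonicity, hence equals the limsup). -/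
def quasiAssouadDim (F : Set X) : ℝ :=
  limsup (fun θ : ℝ => upperSpectrum θ F) (𝓝[<] (1 : ℝ))

/-- The upper box dimension `\overline{dim}_B F := limsup_{δ → 0⁺} log N_δ(F) / (- log δ)`. -/
def upperBoxDim (F : Set X) : ℝ :=
  limsup (fun δ : ℝ => Real.log ((coveringNumber δ F).toNat : ℝ) / (- Real.log δ))
    (𝓝[>] (0 : ℝ))

/-- The Assouad dimension `dim_A F`. -/
def assouadDim (F : Set X) : ℝ :=
  sInf {s : ℝ | 0 ≤ s ∧ ∃ C > (0 : ℝ), ∃ ρ > (0 : ℝ), ∀ r R : ℝ, 0 < r → r < R → R < ρ →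
    ∀ x ∈ F, (coveringNumber r (closedBall x R ∩ F) : ℝ≥0∞) ≤ ENNReal.ofReal (C * (R / r) ^ s)}

/-- The packing pre-measure at scale `δ`: the supremum of `∑ |B_i|^s` over at most countable
collections of disjoint closed balls of radii at most `δ` (and positive) with centres in `F`,
where `|B_i| = 2 r_i` is the diameter. -/
def packingPre (s δ : ℝ) (F : Set X) : ℝ≥0∞ :=
  ⨆ (D : Set (X × ℝ)) (_ : D.Countable)
    (_ : ∀ p ∈ D, p.1 ∈ F ∧ 0 < p.2 ∧ p.2 ≤ δ)
    (_ : D.Pairwise fun p q => Disjoint (closedBall p.1 p.2) (closedBall q.1 q.2)),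
    ∑' p : D, ENNReal.ofReal ((2 * (p : X × ℝ).2) ^ s)

/-- `𝒫₀^s(F) := lim_{δ → 0} 𝒫_δ^s(F)`; the limit exists by monotonicity and equals the inf. -/
def packingPre₀ (s : ℝ) (F : Set X) : ℝ≥0∞ :=
  ⨅ (δ : ℝ) (_ : 0 < δ), packingPre s δ F

/-- The packing (outer) measure `𝒫^s(F)`. -/
def packingMeasure (s : ℝ) (F : Set X) : ℝ≥0∞ :=
  ⨅ (G : ℕ → Set X) (_ : F ⊆ ⋃ i, G i), ∑' i, packingPre₀ s (G i)

/-- The packing dimension `dim_P F = inf {s ≥ 0 : 𝒫^s(F) = 0}`. -/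
def packingDim (F : Set X) : ℝ :=
  sInf {s : ℝ | 0 ≤ s ∧ packingMeasure s F = 0}


/-! ### Auxiliary lemmas -/

section CovLemmas

variable {r r' ρ : ℝ} {E E' : Set X}

lemma Cov.le_card {t : Finset X} (h : E ⊆ ⋃ x ∈ t, closedBall x r) :
    coveringNumber r E ≤ (t.card : ℕ∞) :=
  sInf_le ⟨t, h, rfl⟩

lemma Cov.mono_set (h : E ⊆ E') : coveringNumber r E ≤ coveringNumber r E' :=
  sInf_le_sInf (fun _ ⟨t, ht, hc⟩ => ⟨t, h.trans ht, hc⟩)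

lemma Cov.mono_radius (h : r ≤ r') : coveringNumber r' E ≤ coveringNumber r E := by
  refine sInf_le_sInf (fun n hn => ?_)
  obtain ⟨t, ht, hc⟩ := hn
  exact ⟨t, ht.trans (Set.iUnion₂_mono fun x _ => closedBall_subset_closedBall h), hc⟩

lemma Cov.extract {m : ℕ} (h : coveringNumber r E ≤ (m : ℕ∞)) :
    ∃ t : Finset X, (E ⊆ ⋃ x ∈ t, closedBall x r) ∧ t.card ≤ m := by
  by_contra hc
  push_neg at hc
  have h2 : ((m+1 : ℕ) : ℕ∞) ≤ coveringNumber r E := by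
    refine le_sInf (fun n hn => ?_)
    obtain ⟨t, ht, hcard⟩ := hn
    have := hc t ht
    rw [← hcard]
    exact_mod_cast this
  have := h2.trans h
  simp only [Nat.cast_le] at this
  omega

lemma Cov.comp {m M : ℕ} (h1 : coveringNumber ρ E ≤ (m : ℕ∞))
    (h2 : ∀ z : X, coveringNumber r (closedBall z ρ ∩ E) ≤ (M : ℕ∞)) :
    coveringNumber r E ≤ ((m * M : ℕ) : ℕ∞) := by
  classical
  obtain ⟨t, ht, htc⟩ := Cov.extract h1
  choose u hu huc using fun z => Cov.extract (h2 z)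
  have hcover : E ⊆ ⋃ y ∈ t.biUnion u, closedBall y r := by
    intro x hx
    obtain ⟨z, hz, hxz⟩ := by
      have := ht hx
      simpa using this
    have : x ∈ closedBall z ρ ∩ E := ⟨hxz, hx⟩
    have := hu z this
    simp only [Set.mem_iUnion, exists_prop] at this ⊢
    obtain ⟨y, hy, hxy⟩ := this
    exact ⟨y, Finset.mem_biUnion.2 ⟨z, hz, hy⟩, hxy⟩
  refine le_trans (Cov.le_card hcover) ?_
  have : (t.biUnion u).card ≤ m * M := by
    calc (t.biUnion u).card ≤ ∑ z ∈ t, (u z).card := Finset.card_biUnion_le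
    _ ≤ ∑ _z ∈ t, M := Finset.sum_le_sum (fun z _ => huc z)
    _ = t.card * M := by rw [Finset.sum_const, smul_eq_mul]
    _ ≤ m * M := Nat.mul_le_mul_right M htc
  exact_mod_cast this

lemma Cov.toENNReal_le_ofReal {y : ℝ} {m : ℕ} (h : coveringNumber r E ≤ (m : ℕ∞))
    (h2 : (m : ℝ) ≤ y) : (coveringNumber r E : ℝ≥0∞) ≤ ENNReal.ofReal y := by
  calc (coveringNumber r E : ℝ≥0∞) ≤ ((m : ℕ∞) : ℝ≥0∞) := ENat.toENNReal_le.2 h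
  _ = (m : ℝ≥0∞) := ENat.toENNReal_coe m
  _ = ENNReal.ofReal (m : ℝ) := (ENNReal.ofReal_natCast m).symm
  _ ≤ ENNReal.ofReal y := ENNReal.ofReal_le_ofReal h2

lemma Cov.le_ceil_of_le_ofReal {y : ℝ}
    (h : (coveringNumber r E : ℝ≥0∞) ≤ ENNReal.ofReal y) :
    coveringNumber r E ≤ ((⌈y⌉₊ : ℕ) : ℕ∞) := by
  rw [← ENat.toENNReal_le, ENat.toENNReal_coe, ← ENNReal.ofReal_natCast]
  exact h.trans (ENNReal.ofReal_le_ofReal (Nat.le_ceil y))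

lemma Cov.empty_le : coveringNumber r (∅ : Set X) ≤ ((0:ℕ) : ℕ∞) := by
  simpa using Cov.le_card (t := (∅ : Finset X)) (r := r) (by simp)

end CovLemmas

section SpectrumSets

/-- The defining set of the Assouad spectrum. -/
def ASet (θ : ℝ) (F : Set X) : Set ℝ :=
  {s : ℝ | 0 ≤ s ∧ ∃ C > (0 : ℝ), ∀ R : ℝ, 0 < R → R < 1 → ∀ x ∈ F,
    (coveringNumber (R ^ (1 / θ)) (closedBall x R ∩ F) : ℝ≥0∞)
      ≤ ENNReal.ofReal (C * (R / R ^ (1 / θ)) ^ s)}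

lemma assouadSpectrum_eq_sInf (θ : ℝ) (F : Set X) :
    assouadSpectrum θ F = sInf (ASet θ F) := rfl

/-- The defining set of the upper spectrum. -/
def USet (θ : ℝ) (F : Set X) : Set ℝ :=
  {s : ℝ | 0 ≤ s ∧ ∃ C > (0 : ℝ), ∀ r R : ℝ, 0 < r → r ≤ R ^ (1 / θ) →
    R ^ (1 / θ) < R → R < 1 → 0 < R → ∀ x ∈ F,
    (coveringNumber r (closedBall x R ∩ F) : ℝ≥0∞) ≤ ENNReal.ofReal (C * (R / r) ^ s)}

lemma upperSpectrum_eq_sInf (θ : ℝ) (F : Set X) :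
    upperSpectrum θ F = sInf (USet θ F) := rfl

lemma ASet_bddBelow (θ : ℝ) (F : Set X) : BddBelow (ASet θ F) :=
  ⟨0, fun _ hs => hs.1⟩

lemma USet_bddBelow (θ : ℝ) (F : Set X) : BddBelow (USet θ F) :=
  ⟨0, fun _ hs => hs.1⟩

lemma assouadSpectrum_nonneg (θ : ℝ) (F : Set X) : 0 ≤ assouadSpectrum θ F :=
  Real.sInf_nonneg (fun _ hs => hs.1)

lemma rpow_one_div_pos {θ R : ℝ} (h0 : 0 < R) : 0 < R ^ (1/θ) :=
  Real.rpow_pos_of_pos h0 _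

lemma rpow_one_div_lt {θ R : ℝ} (hθ0 : 0 < θ) (hθ1 : θ < 1) (h0 : 0 < R) (h1 : R < 1) :
    R ^ (1/θ) < R := by
  have h1θ : 1 < 1/θ := one_lt_one_div hθ0 hθ1
  calc R ^ (1/θ) < R ^ (1:ℝ) := Real.rpow_lt_rpow_of_exponent_gt h0 h1 h1θ
  _ = R := Real.rpow_one R

/-- The upper spectrum set is contained in the Assouad spectrum set. -/
lemma USet_subset_ASet {θ : ℝ} (hθ : θ ∈ Set.Ioo (0:ℝ) 1) (F : Set X) :
    USet θ F ⊆ ASet θ F := by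
  rintro s ⟨hs0, C, hC, hH⟩
  refine ⟨hs0, C, hC, fun R hR0 hR1 x hx => ?_⟩
  exact hH (R ^ (1/θ)) R (rpow_one_div_pos hR0) le_rfl
    (rpow_one_div_lt hθ.1 hθ.2 hR0 hR1) hR1 hR0 x hx

/-- The upper spectrum set is antitone in `θ`. -/
lemma USet_antitone {θ₁ θ₂ : ℝ} (h₁ : θ₁ ∈ Set.Ioo (0:ℝ) 1) (h₂ : θ₂ ∈ Set.Ioo (0:ℝ) 1)
    (h12 : θ₁ ≤ θ₂) (F : Set X) : USet θ₂ F ⊆ USet θ₁ F := by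
  rintro s ⟨hs0, C, hC, hH⟩
  refine ⟨hs0, C, hC, fun r R hr0 hr1 hRR hR1 hR0 x hx => ?_⟩
  have hle : R ^ (1/θ₁) ≤ R ^ (1/θ₂) :=
    Real.rpow_le_rpow_of_exponent_ge hR0 hR1.le
      (one_div_le_one_div_of_le h₁.1 h12)
  exact hH r R hr0 (hr1.trans hle) (rpow_one_div_lt h₂.1 h₂.2 hR0 hR1) hR1 hR0 x hx

/-- Rescaling: an admissible exponent at `θ₁ ≤ θ₂` rescales to one at `θ₂`. -/
lemma ASet_rescale {θ₁ θ₂ : ℝ} (h₁ : θ₁ ∈ Set.Ioo (0:ℝ) 1) (h₂ : θ₂ ∈ Set.Ioo (0:ℝ) 1)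
    (h12 : θ₁ ≤ θ₂) {F : Set X} {s : ℝ} (hs : s ∈ ASet θ₁ F) :
    s * ((1 - θ₁)/(1 - θ₂)) ∈ ASet θ₂ F := by
  obtain ⟨hs0, C, hC, hH⟩ := hs
  obtain ⟨hθ₁0, hθ₁1⟩ := h₁
  obtain ⟨hθ₂0, hθ₂1⟩ := h₂
  refine ⟨mul_nonneg hs0 (div_nonneg (by linarith) (by linarith)), C, hC,
    fun R hR0 hR1 x hx => ?_⟩
  set R' := R ^ (θ₁/θ₂) with hR'def
  have hR'0 : 0 < R' := Real.rpow_pos_of_pos hR0 _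
  have hR'1 : R' < 1 := Real.rpow_lt_one hR0.le hR1 (by positivity)
  have hRR' : R ≤ R' := by
    have h := Real.rpow_le_rpow_of_exponent_ge hR0 hR1.le
      ((div_le_one hθ₂0).2 h12)
    rwa [Real.rpow_one] at h
  have key1 : R' ^ (1/θ₁) = R ^ (1/θ₂) := by
    rw [hR'def, ← Real.rpow_mul hR0.le]
    congr 1
    field_simp
  have key2 : C * (R' / R' ^ (1/θ₁)) ^ s
      = C * (R / R ^ (1/θ₂)) ^ (s * ((1 - θ₁)/(1 - θ₂))) := by
    have e1 : R' / R' ^ (1/θ₁) = R' ^ (1 - 1/θ₁) := by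
      rw [Real.rpow_sub hR'0, Real.rpow_one]
    have e2 : R / R ^ (1/θ₂) = R ^ (1 - 1/θ₂) := by
      rw [Real.rpow_sub hR0, Real.rpow_one]
    rw [e1, e2, hR'def, ← Real.rpow_mul hR0.le, ← Real.rpow_mul hR0.le,
      ← Real.rpow_mul hR0.le]
    congr 1
    congr 1
    have h1ne : θ₁ ≠ 0 := hθ₁0.ne'
    have h2ne : θ₂ ≠ 0 := hθ₂0.ne'
    have h12ne : (1:ℝ) - θ₂ ≠ 0 := by linarith
    field_simp
    ring
  calc (coveringNumber (R ^ (1/θ₂)) (closedBall x R ∩ F) : ℝ≥0∞)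
      ≤ (coveringNumber (R ^ (1/θ₂)) (closedBall x R' ∩ F) : ℝ≥0∞) := by
        exact ENat.toENNReal_le.2 (Cov.mono_set
          (Set.inter_subset_inter_left F (closedBall_subset_closedBall hRR')))
    _ = (coveringNumber (R' ^ (1/θ₁)) (closedBall x R' ∩ F) : ℝ≥0∞) := by rw [key1]
    _ ≤ ENNReal.ofReal (C * (R' / R' ^ (1/θ₁)) ^ s) := hH R' hR'0 hR'1 x hx
    _ = ENNReal.ofReal (C * (R / R ^ (1/θ₂)) ^ (s * ((1 - θ₁)/(1 - θ₂)))) := by rw [key2]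

lemma assouadSpectrum_le_rescale {θ₁ θ₂ : ℝ} (h₁ : θ₁ ∈ Set.Ioo (0:ℝ) 1)
    (h₂ : θ₂ ∈ Set.Ioo (0:ℝ) 1) (h12 : θ₁ ≤ θ₂) {F : Set X} (hne : (ASet θ₁ F).Nonempty) :
    assouadSpectrum θ₂ F ≤ assouadSpectrum θ₁ F * ((1 - θ₁)/(1 - θ₂)) := by
  have hc : (0:ℝ) < (1 - θ₁)/(1 - θ₂) :=
    div_pos (by linarith [h₁.2]) (by linarith [h₂.2])
  rw [assouadSpectrum_eq_sInf, assouadSpectrum_eq_sInf]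
  rw [← div_le_iff₀ hc]
  refine le_csInf hne (fun s hs => ?_)
  rw [div_le_iff₀ hc]
  exact csInf_le (ASet_bddBelow θ₂ F) (ASet_rescale h₁ h₂ h12 hs)

end SpectrumSets

section Euclidean
open MeasureTheory
variable {d : ℕ}
local notation "Euc" => EuclideanSpace ℝ (Fin d)

lemma nat_le_ceil' {n : ℕ} {y : ℝ} (h : (n:ℝ) ≤ y) : n ≤ ⌈y⌉₊ := by
  have := Nat.ceil_mono h
  simpa using this

lemma sep_card_bound (x : Euc) {r R : ℝ} (hr : 0 < r) (hrR : r ≤ R)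
    (t : Finset Euc) (hsub : ↑t ⊆ closedBall x R)
    (hsep : (↑t : Set Euc).Pairwise fun a b => r < dist a b) :
    (t.card : ℝ) ≤ (3:ℝ)^d * (R/r)^d := by
  classical
  set μ : Measure Euc := volume
  have hfr : Module.finrank ℝ Euc = d := finrank_euclideanSpace_fin
  set V : ℝ≥0∞ := μ (closedBall (0 : Euc) 1) with hV
  have hV0 : V ≠ 0 := by
    refine (lt_of_lt_of_le (measure_ball_pos μ (0:Euc) one_pos)
      (measure_mono ball_subset_closedBall)).ne'
  have hVtop : V ≠ ⊤ := measure_closedBall_lt_top.ne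
  have hball : ∀ a : Euc, ∀ ρ : ℝ, 0 ≤ ρ → μ (closedBall a ρ) = ENNReal.ofReal (ρ ^ d) * V := by
    intro a ρ hρ
    rw [hV, Measure.addHaar_closedBall' μ a hρ, hfr]
  have hdisj : (↑t : Set Euc).PairwiseDisjoint (fun a => closedBall a (r/2)) := by
    intro a ha b hb hab
    exact closedBall_disjoint_closedBall (by linarith [hsep ha hb hab])
  have hsum : μ (⋃ a ∈ t, closedBall a (r/2)) = ∑ a ∈ t, μ (closedBall a (r/2)) :=
    measure_biUnion_finset hdisj (fun a _ => measurableSet_closedBall)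
  have hsubU : (⋃ a ∈ t, closedBall a (r/2)) ⊆ closedBall x (R + r/2) := by
    refine Set.iUnion₂_subset fun a ha => ?_
    refine closedBall_subset_closedBall' ?_
    have := hsub ha
    rw [mem_closedBall] at this
    linarith
  have key : (t.card : ℝ≥0∞) * ENNReal.ofReal ((r/2)^d) * V ≤ ENNReal.ofReal ((R + r/2)^d) * V := by
    calc (t.card : ℝ≥0∞) * ENNReal.ofReal ((r/2)^d) * V
        = ∑ a ∈ t, ENNReal.ofReal ((r/2)^d) * V := by
          rw [Finset.sum_const, nsmul_eq_mul, mul_assoc]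
      _ = ∑ a ∈ t, μ (closedBall a (r/2)) := by
          refine Finset.sum_congr rfl fun a _ => ?_
          rw [hball a (r/2) (by linarith)]
      _ = μ (⋃ a ∈ t, closedBall a (r/2)) := hsum.symm
      _ ≤ μ (closedBall x (R + r/2)) := measure_mono hsubU
      _ = ENNReal.ofReal ((R + r/2)^d) * V := hball x _ (by linarith)
  have key2 : (t.card : ℝ≥0∞) * ENNReal.ofReal ((r/2)^d) ≤ ENNReal.ofReal ((R + r/2)^d) :=
    (ENNReal.mul_le_mul_iff_left hV0 hVtop).1 key
  have hr2 : (0:ℝ) < (r/2)^d := by positivity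
  have key3 : (t.card : ℝ) * ((r/2)^d) ≤ (R + r/2)^d := by
    have : ENNReal.ofReal ((t.card : ℝ) * ((r/2)^d)) ≤ ENNReal.ofReal ((R + r/2)^d) := by
      rw [ENNReal.ofReal_mul (by positivity)]
      simpa [ENNReal.ofReal_natCast] using key2
    exact (ENNReal.ofReal_le_ofReal_iff (pow_nonneg (by linarith) d)).1 this
  have hRr : (R + r/2)^d ≤ ((3*(R/r)) * (r/2))^d := by
    have h3 : 3*(R/r)*(r/2) = 3*R/2 := by field_simp
    exact pow_le_pow_left₀ (by linarith) (by rw [h3]; linarith) d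
  have hfin : (t.card : ℝ) * ((r/2)^d) ≤ (3*(R/r))^d * ((r/2)^d) := by
    rw [← mul_pow]; exact key3.trans hRr
  have := (mul_le_mul_iff_left₀ hr2).1 hfin
  calc (t.card : ℝ) ≤ (3*(R/r))^d := this
    _ = (3:ℝ)^d * (R/r)^d := mul_pow 3 (R/r) d

lemma euclid_cov (x : Euc) {r R : ℝ} (hr : 0 < r) (hrR : r ≤ R) :
    coveringNumber r (closedBall x R) ≤ ((⌈(3:ℝ)^d * (R/r)^d⌉₊ : ℕ) : ℕ∞) := by
  classical
  set P : Finset Euc → Prop :=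
    fun t => ↑t ⊆ closedBall x R ∧ (↑t : Set Euc).Pairwise fun a b => r < dist a b with hP
  set NN : Set ℕ := {n | ∃ t : Finset Euc, P t ∧ t.card = n} with hNN
  have hne : NN.Nonempty := ⟨0, ∅, by simp [hP], by simp⟩
  have hbdd : BddAbove NN := by
    refine ⟨⌈(3:ℝ)^d * (R/r)^d⌉₊, fun n hn => ?_⟩
    obtain ⟨t, ⟨hsub, hsep⟩, hcard⟩ := hn
    have := sep_card_bound x hr hrR t hsub hsep
    rw [hcard] at this
    exact nat_le_ceil' this
  obtain ⟨t, hPt, hcard⟩ := Nat.sSup_mem hne hbdd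
  have hcover : closedBall x R ⊆ ⋃ a ∈ t, closedBall a r := by
    intro y hy
    by_contra hyc
    simp only [Set.mem_iUnion, exists_prop, not_exists, not_and, mem_closedBall] at hyc
    have hynot : y ∉ (↑t : Set Euc) := by
      intro hyt
      exact absurd (le_of_lt hr) (not_le.2 (by simpa using hyc y hyt))
    have hPins : P (insert y t) := by
      constructor
      · intro z hz
        simp only [Finset.coe_insert, Set.mem_insert_iff] at hz
        rcases hz with rfl | hz
        · exact hy
        · exact hPt.1 hz
      · rw [Finset.coe_insert]
        haveI : Std.Symm (fun a b : Euc => r < dist a b) :=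
          ⟨fun a b hab => by rw [dist_comm]; exact hab⟩
        refine (Set.pairwise_insert_of_symm).2 ⟨hPt.2, fun b hb _ => ?_⟩
        · exact not_le.1 fun hle => (hyc b hb) (by rwa [dist_comm] at hle ⊢)
    have : (insert y t).card ∈ NN := ⟨insert y t, hPins, rfl⟩
    have hle := le_csSup hbdd this
    rw [Finset.card_insert_of_notMem (by simpa using hynot)] at hle
    omega
  refine (Cov.le_card hcover).trans ?_
  have : t.card ≤ ⌈(3:ℝ)^d * (R/r)^d⌉₊ := by
    have := sep_card_bound x hr hrR t hPt.1 hPt.2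
    exact nat_le_ceil' this
  exact_mod_cast this


lemma cov_ball_le (x : Euc) {r R : ℝ} (hr : 0 < r) (hrR : r ≤ R) :
    (coveringNumber r (closedBall x R) : ℝ≥0∞)
      ≤ ENNReal.ofReal (((3:ℝ)^d + 1) * (R/r) ^ (d:ℝ)) := by
  refine Cov.toENNReal_le_ofReal (euclid_cov x hr hrR) ?_
  have h1 : (1:ℝ) ≤ R/r := (one_le_div hr).2 hrR
  have h4 : (1:ℝ) ≤ (R/r)^d := one_le_pow₀ h1
  have h2 : (0:ℝ) ≤ (3:ℝ)^d * (R/r)^d := by positivity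
  have h3 := (Nat.ceil_lt_add_one h2).le
  calc ((⌈(3:ℝ)^d * (R/r)^d⌉₊ : ℕ) : ℝ) ≤ (3:ℝ)^d * (R/r)^d + 1 := h3
  _ ≤ (3:ℝ)^d * (R/r)^d + (R/r)^d := by linarith
  _ = ((3:ℝ)^d + 1) * (R/r)^d := by ring
  _ = ((3:ℝ)^d + 1) * (R/r)^(d:ℝ) := by rw [Real.rpow_natCast]

lemma d_mem_ASet {θ : ℝ} (hθ : θ ∈ Set.Ioo (0:ℝ) 1) (F : Set Euc) :
    ((d : ℝ)) ∈ ASet θ F := by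
  refine ⟨Nat.cast_nonneg d, (3:ℝ)^d + 1, by positivity, fun R hR0 hR1 x hx => ?_⟩
  have hr0 : 0 < R ^ (1/θ) := rpow_one_div_pos hR0
  have hrR : R ^ (1/θ) ≤ R := (rpow_one_div_lt hθ.1 hθ.2 hR0 hR1).le
  calc (coveringNumber (R ^ (1/θ)) (closedBall x R ∩ F) : ℝ≥0∞)
      ≤ (coveringNumber (R ^ (1/θ)) (closedBall x R) : ℝ≥0∞) :=
        ENat.toENNReal_le.2 (Cov.mono_set Set.inter_subset_left)
    _ ≤ ENNReal.ofReal (((3:ℝ)^d + 1) * (R / R ^ (1/θ)) ^ (d:ℝ)) := cov_ball_le x hr0 hrR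

lemma d_mem_USet {θ : ℝ} (hθ : θ ∈ Set.Ioo (0:ℝ) 1) (F : Set Euc) :
    ((d : ℝ)) ∈ USet θ F := by
  refine ⟨Nat.cast_nonneg d, (3:ℝ)^d + 1, by positivity,
    fun r R hr0 hr1 hRR hR1 hR0 x hx => ?_⟩
  have hrR : r ≤ R := hr1.trans hRR.le
  calc (coveringNumber r (closedBall x R ∩ F) : ℝ≥0∞)
      ≤ (coveringNumber r (closedBall x R) : ℝ≥0∞) :=
        ENat.toENNReal_le.2 (Cov.mono_set Set.inter_subset_left)
    _ ≤ ENNReal.ofReal (((3:ℝ)^d + 1) * (R / r) ^ (d:ℝ)) := cov_ball_le x hr0 hrR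

end Euclidean
section Composition
variable {d : ℕ}
local notation "Euc" => EuclideanSpace ℝ (Fin d)

lemma one_le_mul' {a b : ℝ} (ha : 1 ≤ a) (hb : 1 ≤ b) : 1 ≤ a * b := by nlinarith

set_option maxHeartbeats 1000000 in
/-- Key composition lemma: an admissible exponent for `θ` is admissible for `θ^2`. -/
lemma ASet_sq {θ : ℝ} (hθ : θ ∈ Set.Ioo (0:ℝ) 1) {F : Set Euc} {s : ℝ}
    (hs : s ∈ ASet θ F) : s ∈ ASet (θ^2) F := by
  obtain ⟨hθ0, hθ1⟩ := hθ
  obtain ⟨hs0, C0, hC0, hH0⟩ := hs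
  set C : ℝ := C0 + 1 with hCdef
  have hC1 : 1 ≤ C := by linarith
  have hC : 0 < C := by linarith
  have hH : ∀ R : ℝ, 0 < R → R < 1 → ∀ x ∈ F,
      (coveringNumber (R ^ (1/θ)) (closedBall x R ∩ F) : ℝ≥0∞)
        ≤ ENNReal.ofReal (C * (R / R ^ (1/θ)) ^ s) := by
    intro R hR0 hR1 x hx
    refine (hH0 R hR0 hR1 x hx).trans (ENNReal.ofReal_le_ofReal ?_)
    have h := Real.rpow_nonneg (div_nonneg hR0.le (Real.rpow_pos_of_pos hR0 (1/θ)).le) s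
    have h2 : C0 ≤ C := by linarith
    exact mul_le_mul_of_nonneg_right h2 h
  set c : ℝ := (3:ℝ)^d + 1 with hcdef
  have h3d : (0:ℝ) ≤ 3^d := by positivity
  have hc1 : (1:ℝ) ≤ c := by rw [hcdef]; linarith
  have hc0 : 0 < c := by linarith
  have hθ20 : 0 < θ^2 := by positivity
  have hθ21 : θ^2 < 1 := by nlinarith
  have hexp : (1:ℝ)/θ^2 = (1/θ) * (1/θ) := by
    field_simp
  set Rc : ℝ := (1/2:ℝ) ^ θ with hRcdef
  have hRc0 : 0 < Rc := Real.rpow_pos_of_pos one_half_pos θ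
  set CA : ℝ := 8 * C * C * c * (2:ℝ)^s * (2:ℝ)^((1/θ) * (d:ℝ)) with hCAdef
  have hCA0 : 0 < CA := by
    have h1 : (0:ℝ) < (2:ℝ)^s := Real.rpow_pos_of_pos two_pos s
    have h2 : (0:ℝ) < (2:ℝ)^((1/θ) * (d:ℝ)) := Real.rpow_pos_of_pos two_pos _
    positivity
  set CB : ℝ := c * Rc ^ ((1 - 1/θ^2) * (d:ℝ)) with hCBdef
  have hCB0 : 0 < CB := mul_pos hc0 (Real.rpow_pos_of_pos hRc0 _)
  refine ⟨hs0, CA + CB, by linarith, fun R hR0 hR1 x hx => ?_⟩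
  set r2 : ℝ := R ^ (1/θ^2) with hr2def
  have hr20 : 0 < r2 := Real.rpow_pos_of_pos hR0 _
  have hr2R : r2 < R := rpow_one_div_lt hθ20 hθ21 hR0 hR1
  have hRr2_1 : 1 ≤ R / r2 := (one_le_div hr20).2 hr2R.le
  have hRr2s0 : (0:ℝ) ≤ (R / r2)^s := Real.rpow_nonneg (by positivity) s
  have hRr2s1 : (1:ℝ) ≤ (R / r2)^s := Real.one_le_rpow hRr2_1 hs0
  by_cases hcase : R < Rc
  · -- small R : chain two applications of the hypothesis plus a Euclidean refinement
    set ρ : ℝ := R ^ (1/θ) with hρdef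
    have hρ0 : 0 < ρ := Real.rpow_pos_of_pos hR0 _
    have hρhalf : ρ < 1/2 := by
      have h := Real.rpow_lt_rpow hR0.le hcase (by positivity : (0:ℝ) < 1/θ)
      have h2 : Rc ^ (1/θ) = 1/2 := by
        rw [hRcdef, ← Real.rpow_mul (by norm_num : (0:ℝ) ≤ 1/2), mul_one_div,
          div_self hθ0.ne', Real.rpow_one]
      rw [hρdef]
      rw [h2] at h
      exact h
    have h2ρ0 : 0 < 2*ρ := by linarith
    have h2ρ1 : 2*ρ < 1 := by linarith
    set ρ2 : ℝ := (2*ρ) ^ (1/θ) with hρ2def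
    have hρ20 : 0 < ρ2 := Real.rpow_pos_of_pos h2ρ0 _
    have hr2ρ : r2 = ρ ^ (1/θ) := by
      rw [hr2def, hρdef, ← Real.rpow_mul hR0.le, hexp]
    have hr2ρ2 : r2 ≤ ρ2 := by
      rw [hr2ρ, hρ2def]
      exact Real.rpow_le_rpow hρ0.le (by linarith) (by positivity)
    have hρ2_le : ρ2 ≤ 2*ρ := by
      have h := Real.rpow_le_rpow_of_exponent_ge h2ρ0 h2ρ1.le
        (one_lt_one_div hθ0 hθ1).le
      rw [Real.rpow_one] at h
      rw [hρ2def]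
      exact h
    set m₁ : ℕ := ⌈C * (R/ρ) ^ s⌉₊ with hm₁
    have hstep1 : coveringNumber ρ (closedBall x R ∩ F) ≤ (m₁ : ℕ∞) := by
      refine Cov.le_ceil_of_le_ofReal ?_
      rw [hρdef]
      exact hH R hR0 hR1 x hx
    set m₂ : ℕ := ⌈C * ((2*ρ)/ρ2) ^ s⌉₊ with hm₂
    have hstep2 : ∀ z : Euc,
        coveringNumber ρ2 (closedBall z ρ ∩ (closedBall x R ∩ F)) ≤ (m₂ : ℕ∞) := by
      intro z
      rcases Set.eq_empty_or_nonempty (closedBall z ρ ∩ (closedBall x R ∩ F)) with he | hne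
      · rw [he]
        exact Cov.empty_le.trans (by exact_mod_cast Nat.zero_le m₂)
      · obtain ⟨y, hy⟩ := hne
        have hyF : y ∈ F := hy.2.2
        have hsub : closedBall z ρ ∩ (closedBall x R ∩ F) ⊆ closedBall y (2*ρ) ∩ F := by
          rintro w ⟨hw1, _hw2, hw3⟩
          refine ⟨?_, hw3⟩
          rw [mem_closedBall] at hw1 ⊢
          have hzy : dist z y ≤ ρ := by
            rw [dist_comm]
            exact hy.1
          calc dist w y ≤ dist w z + dist z y := dist_triangle w z y
          _ ≤ ρ + ρ := add_le_add hw1 hzy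
          _ = 2*ρ := by ring
        refine Cov.le_ceil_of_le_ofReal ?_
        calc (coveringNumber ρ2 (closedBall z ρ ∩ (closedBall x R ∩ F)) : ℝ≥0∞)
            ≤ (coveringNumber ρ2 (closedBall y (2*ρ) ∩ F) : ℝ≥0∞) :=
              ENat.toENNReal_le.2 (Cov.mono_set hsub)
          _ ≤ ENNReal.ofReal (C * ((2*ρ) / ρ2) ^ s) := by
              rw [hρ2def]
              exact hH (2*ρ) h2ρ0 h2ρ1 y hyF
    have hcomp1 : coveringNumber ρ2 (closedBall x R ∩ F) ≤ ((m₁ * m₂ : ℕ) : ℕ∞) :=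
      Cov.comp hstep1 hstep2
    set m₃ : ℕ := ⌈c * (ρ2/r2) ^ (d:ℝ)⌉₊ with hm₃
    have hstep3 : ∀ z : Euc,
        coveringNumber r2 (closedBall z ρ2 ∩ (closedBall x R ∩ F)) ≤ (m₃ : ℕ∞) := by
      intro z
      refine Cov.le_ceil_of_le_ofReal ?_
      calc (coveringNumber r2 (closedBall z ρ2 ∩ (closedBall x R ∩ F)) : ℝ≥0∞)
          ≤ (coveringNumber r2 (closedBall z ρ2) : ℝ≥0∞) :=
            ENat.toENNReal_le.2 (Cov.mono_set Set.inter_subset_left)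
        _ ≤ ENNReal.ofReal (c * (ρ2/r2) ^ (d:ℝ)) := by
            rw [hcdef]
            exact cov_ball_le z hr20 hr2ρ2
    have hcomp2 : coveringNumber r2 (closedBall x R ∩ F) ≤ ((m₁ * m₂ * m₃ : ℕ) : ℕ∞) :=
      Cov.comp hcomp1 hstep3
    refine Cov.toENNReal_le_ofReal hcomp2 ?_
    -- numerics
    have hmb : ∀ y : ℝ, 1 ≤ y → ((⌈y⌉₊ : ℕ) : ℝ) ≤ 2 * y := by
      intro y hy
      have h0 : (0:ℝ) ≤ y := by linarith
      have := (Nat.ceil_lt_add_one h0).le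
      linarith
    have hRρ1 : 1 ≤ R/ρ := by
      refine (one_le_div hρ0).2 ?_
      rw [hρdef]
      exact (rpow_one_div_lt hθ0 hθ1 hR0 hR1).le
    have h2ρρ2_1 : 1 ≤ (2*ρ)/ρ2 := (one_le_div hρ20).2 hρ2_le
    have hρ2r2_1 : 1 ≤ ρ2/r2 := (one_le_div hr20).2 hr2ρ2
    have hy₁ : 1 ≤ C * (R/ρ)^s := one_le_mul' hC1 (Real.one_le_rpow hRρ1 hs0)
    have hy₂ : 1 ≤ C * ((2*ρ)/ρ2)^s := one_le_mul' hC1 (Real.one_le_rpow h2ρρ2_1 hs0)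
    have hy₃ : 1 ≤ c * (ρ2/r2)^(d:ℝ) :=
      one_le_mul' hc1 (Real.one_le_rpow hρ2r2_1 (Nat.cast_nonneg d))
    have hb₁ := hmb _ hy₁
    have hb₂ := hmb _ hy₂
    have hb₃ := hmb _ hy₃
    have hT : (R/ρ)^s * ((2*ρ)/ρ2)^s ≤ (2:ℝ)^s * (R/r2)^s := by
      rw [← Real.mul_rpow (by positivity) (by positivity)]
      have e2 : (R/ρ) * ((2*ρ)/ρ2) = 2 * (R/ρ2) := by
        field_simp
      rw [e2, Real.mul_rpow (by norm_num) (by positivity)]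
      have e4 : R/ρ2 ≤ R/r2 := by gcongr
      exact mul_le_mul_of_nonneg_left
        (Real.rpow_le_rpow (by positivity) e4 hs0)
        (Real.rpow_nonneg (by norm_num) s)
    have hE5 : (ρ2/r2)^(d:ℝ) = (2:ℝ)^((1/θ)*(d:ℝ)) := by
      have h : ρ2/r2 = (2:ℝ)^(1/θ) := by
        rw [hρ2def, hr2ρ, Real.mul_rpow (by norm_num) (le_of_lt hρ0)]
        field_simp
      rw [h, ← Real.rpow_mul (by norm_num)]
    have hρ2r2d0 : (0:ℝ) ≤ (ρ2/r2)^(d:ℝ) := Real.rpow_nonneg (by positivity) _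
    calc ((m₁ * m₂ * m₃ : ℕ) : ℝ)
        = (m₁:ℝ) * (m₂:ℝ) * (m₃:ℝ) := by push_cast; ring
      _ ≤ (2*(C * (R/ρ)^s)) * (2*(C * ((2*ρ)/ρ2)^s)) * (2*(c * (ρ2/r2)^(d:ℝ))) := by
          refine mul_le_mul (mul_le_mul hb₁ hb₂ (Nat.cast_nonneg _) (by positivity))
            hb₃ (Nat.cast_nonneg _) (by positivity)
      _ = 8*C*C*c * ((R/ρ)^s * ((2*ρ)/ρ2)^s) * (ρ2/r2)^(d:ℝ) := by ring
      _ ≤ 8*C*C*c * ((2:ℝ)^s * (R/r2)^s) * (ρ2/r2)^(d:ℝ) := by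
          refine mul_le_mul_of_nonneg_right (mul_le_mul_of_nonneg_left hT (by positivity))
            hρ2r2d0
      _ = CA * (R/r2)^s := by
          rw [hE5, hCAdef]
          ring
      _ ≤ (CA + CB) * (R/r2)^s :=
          mul_le_mul_of_nonneg_right (le_add_of_nonneg_right hCB0.le) hRr2s0
  · -- large R : direct Euclidean covering bound
    push_neg at hcase
    have main : c * (R/r2)^(d:ℝ) ≤ (CA + CB) * (R / r2) ^ s := ?_
    · calc (coveringNumber (R ^ (1/θ^2)) (closedBall x R ∩ F) : ℝ≥0∞)
          ≤ (coveringNumber r2 (closedBall x R) : ℝ≥0∞) := by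
            rw [← hr2def]
            exact ENat.toENNReal_le.2 (Cov.mono_set Set.inter_subset_left)
        _ ≤ ENNReal.ofReal (c * (R/r2) ^ (d:ℝ)) := by
            rw [hcdef]
            exact cov_ball_le x hr20 hr2R.le
        _ ≤ ENNReal.ofReal ((CA + CB) * (R / r2) ^ s) := ENNReal.ofReal_le_ofReal main
    have hRr2d : (R/r2)^(d:ℝ) ≤ Rc ^ ((1 - 1/θ^2) * (d:ℝ)) := by
      have e : R/r2 = R ^ (1 - 1/θ^2) := by
        rw [hr2def, Real.rpow_sub hR0, Real.rpow_one]
      rw [e, ← Real.rpow_mul hR0.le]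
      have hnp : (1 - 1/θ^2) * (d:ℝ) ≤ 0 := by
        have h1 : (1:ℝ) < 1/θ^2 := one_lt_one_div hθ20 hθ21
        exact mul_nonpos_iff.2 (Or.inr ⟨by linarith, Nat.cast_nonneg d⟩)
      exact Real.rpow_le_rpow_of_nonpos hRc0 hcase hnp
    calc c * (R/r2)^(d:ℝ)
        ≤ c * Rc ^ ((1 - 1/θ^2) * (d:ℝ)) := mul_le_mul_of_nonneg_left hRr2d hc0.le
      _ = CB := hCBdef.symm
      _ = CB * 1 := (mul_one _).symm
      _ ≤ CB * (R/r2)^s := mul_le_mul_of_nonneg_left hRr2s1 hCB0.le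
      _ ≤ (CA + CB) * (R/r2)^s :=
          mul_le_mul_of_nonneg_right (le_add_of_nonneg_left hCA0.le) hRr2s0

end Composition
section MainProof
variable {d : ℕ}
local notation "Euc" => EuclideanSpace ℝ (Fin d)

theorem genUpperBoxDim_le_assouadSpectrum_le_min'
    (θ : ℝ) (hθ : θ ∈ Set.Ioo (0 : ℝ) 1) (F : Set Euc) :
    genUpperBoxDim F ≤ assouadSpectrum θ F ∧
      assouadSpectrum θ F ≤ min (genUpperBoxDim F / (1 - θ)) (quasiAssouadDim F) := by
  obtain ⟨hθ0, hθ1⟩ := hθ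
  have hθIoo : θ ∈ Set.Ioo (0:ℝ) 1 := ⟨hθ0, hθ1⟩
  have hAle : ∀ τ, τ ∈ Set.Ioo (0:ℝ) 1 → assouadSpectrum τ F ≤ (d:ℝ) := by
    intro τ hτ
    rw [assouadSpectrum_eq_sInf]
    exact csInf_le (ASet_bddBelow τ F) (d_mem_ASet hτ F)
  have hA0 : ∀ τ : ℝ, 0 ≤ assouadSpectrum τ F := fun τ => assouadSpectrum_nonneg τ F
  have hAne : ∀ τ, τ ∈ Set.Ioo (0:ℝ) 1 → (ASet τ F).Nonempty :=
    fun τ hτ => ⟨(d:ℝ), d_mem_ASet hτ F⟩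
  have hUne : ∀ τ, τ ∈ Set.Ioo (0:ℝ) 1 → (USet τ F).Nonempty :=
    fun τ hτ => ⟨(d:ℝ), d_mem_USet hτ F⟩
  refine ⟨?_, le_min ?_ ?_⟩
  · -- genUpperBoxDim ≤ assouadSpectrum θ
    by_contra hlt
    push_neg at hlt
    set ε : ℝ := (genUpperBoxDim F - assouadSpectrum θ F)/2 with hεdef
    have hε0 : 0 < ε := by
      rw [hεdef]
      linarith
    suffices h : genUpperBoxDim F ≤ assouadSpectrum θ F + ε by
      rw [hεdef] at h
      linarith
    obtain ⟨s, hsmem, hslt0⟩ := Real.lt_sInf_add_pos (hAne θ hθIoo) (half_pos hε0)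
    have hslt : s < assouadSpectrum θ F + ε/2 := by
      rw [assouadSpectrum_eq_sInf]
      exact hslt0
    have hs0 : 0 ≤ s := hsmem.1
    set τ : ℕ → ℝ := fun m => θ ^ (2^m) with hτdef
    have hτIoo : ∀ m, τ m ∈ Set.Ioo (0:ℝ) 1 := by
      intro m
      constructor
      · exact pow_pos hθ0 _
      · exact pow_lt_one₀ hθ0.le hθ1 (by positivity)
    have hτle : ∀ n, τ n ≤ θ ^ n := by
      intro n
      simp only [hτdef]
      exact pow_le_pow_of_le_one hθ0.le hθ1.le (Nat.lt_two_pow_self (n := n)).le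
    have hmem : ∀ m, s ∈ ASet (τ m) F := by
      intro m
      induction m with
      | zero => simpa [hτdef] using hsmem
      | succ n ih =>
          have hsq : τ (n+1) = (τ n)^2 := by
            simp only [hτdef]
            rw [pow_succ, pow_mul]
          rw [hsq]
          exact ASet_sq (hτIoo n) ih
    have hAτ : ∀ m, assouadSpectrum (τ m) F ≤ s := by
      intro m
      rw [assouadSpectrum_eq_sInf]
      exact csInf_le (ASet_bddBelow _ F) (hmem m)
    have hsε : 0 < s + ε/2 := by linarith
    set t0 : ℝ := (ε/2)/(s + ε/2) with ht0def
    have ht00 : 0 < t0 := div_pos (half_pos hε0) hsε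
    obtain ⟨m₀, hm₀⟩ : ∃ m₀ : ℕ, τ m₀ ≤ t0 := by
      obtain ⟨n, hn⟩ := exists_pow_lt_of_lt_one ht00 hθ1
      exact ⟨n, (hτle n).trans hn.le⟩
    have hev : ∀ᶠ θ' in 𝓝[>] (0:ℝ),
        assouadSpectrum θ' F ≤ assouadSpectrum θ F + ε := by
      filter_upwards [Ioo_mem_nhdsGT_of_mem
        (⟨le_refl (0:ℝ), (hτIoo m₀).1⟩ : (0:ℝ) ∈ Set.Ico (0:ℝ) (τ m₀))] with θ' hθ'
      have hθ'Ioo : θ' ∈ Set.Ioo (0:ℝ) 1 := ⟨hθ'.1, lt_trans hθ'.2 (hτIoo m₀).2⟩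
      have h1θ'0 : 0 < 1 - θ' := by linarith [hθ'Ioo.2]
      obtain ⟨n, hn⟩ := exists_pow_lt_of_lt_one hθ'.1 hθ1
      have hτn : τ n ≤ θ' := ((hτle n).trans_lt hn).le
      have hr := assouadSpectrum_le_rescale (hτIoo n) hθ'Ioo hτn ⟨s, hmem n⟩
      have hfrac : (1 - τ n)/(1 - θ') ≤ 1/(1 - θ') :=
        (div_le_div_iff_of_pos_right h1θ'0).2 (by linarith [(hτIoo n).1])
      have hA' : assouadSpectrum θ' F ≤ s * (1/(1 - θ')) := by
        calc assouadSpectrum θ' F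
            ≤ assouadSpectrum (τ n) F * ((1 - τ n)/(1 - θ')) := hr
          _ ≤ s * ((1 - τ n)/(1 - θ')) :=
              mul_le_mul_of_nonneg_right (hAτ n)
                (div_nonneg (by linarith [(hτIoo n).2]) h1θ'0.le)
          _ ≤ s * (1/(1 - θ')) := mul_le_mul_of_nonneg_left hfrac hs0
      have hθ't0 : θ' ≤ t0 := hθ'.2.le.trans hm₀
      have hkey : s * (1/(1 - θ')) ≤ s + ε/2 := by
        rw [mul_one_div, div_le_iff₀ h1θ'0]
        have h1 : θ' * (s + ε/2) ≤ ε/2 := by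
          calc θ' * (s + ε/2) ≤ t0 * (s + ε/2) :=
                mul_le_mul_of_nonneg_right hθ't0 hsε.le
            _ = ε/2 := by
                rw [ht0def]
                field_simp
        nlinarith
      calc assouadSpectrum θ' F ≤ s * (1/(1 - θ')) := hA'
        _ ≤ s + ε/2 := hkey
        _ ≤ assouadSpectrum θ F + ε := by linarith
    have hcb : IsCoboundedUnder (· ≤ ·) (𝓝[>] (0:ℝ)) (fun θ' => assouadSpectrum θ' F) :=
      isCoboundedUnder_le_of_eventually_le _ (Eventually.of_forall (fun τ' => hA0 τ'))
    exact limsup_le_of_le hcb hev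
  · -- assouadSpectrum θ ≤ genUpperBoxDim / (1-θ)
    have h1θ : (0:ℝ) < 1 - θ := by linarith
    have h2 : ∀ θ' ∈ Set.Ioo (0:ℝ) θ,
        assouadSpectrum θ F * (1-θ) ≤ assouadSpectrum θ' F := by
      intro θ' hθ'
      have hθ'Ioo : θ' ∈ Set.Ioo (0:ℝ) 1 := ⟨hθ'.1, lt_trans hθ'.2 hθ1⟩
      have h := assouadSpectrum_le_rescale hθ'Ioo hθIoo hθ'.2.le (hAne θ' hθ'Ioo)
      have h1θ' : 1 - θ' ≤ 1 := by linarith [hθ'.1]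
      have hmul := mul_le_mul_of_nonneg_right h h1θ.le
      have heq : assouadSpectrum θ' F * ((1-θ')/(1-θ)) * (1-θ)
          = assouadSpectrum θ' F * (1-θ') := by
        field_simp
      rw [heq] at hmul
      calc assouadSpectrum θ F * (1-θ) ≤ assouadSpectrum θ' F * (1-θ') := hmul
        _ ≤ assouadSpectrum θ' F * 1 := mul_le_mul_of_nonneg_left h1θ' (hA0 θ')
        _ = assouadSpectrum θ' F := mul_one _
    have hev : ∀ᶠ θ' in 𝓝[>] (0:ℝ),
        assouadSpectrum θ F * (1-θ) ≤ assouadSpectrum θ' F := by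
      filter_upwards [Ioo_mem_nhdsGT_of_mem
        (⟨le_refl (0:ℝ), hθ0⟩ : (0:ℝ) ∈ Set.Ico (0:ℝ) θ)] with θ' hθ'
      exact h2 θ' hθ'
    have hbdd : IsBoundedUnder (· ≤ ·) (𝓝[>] (0:ℝ))
        (fun θ' => assouadSpectrum θ' F) := by
      refine ⟨(d:ℝ), ?_⟩
      rw [eventually_map]
      filter_upwards [Ioo_mem_nhdsGT_of_mem
        (⟨le_refl (0:ℝ), one_pos⟩ : (0:ℝ) ∈ Set.Ico (0:ℝ) 1)] with τ hτ
      exact hAle τ hτ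
    have hG : assouadSpectrum θ F * (1-θ) ≤ genUpperBoxDim F :=
      le_limsup_of_frequently_le hev.frequently hbdd
    rw [le_div_iff₀ h1θ]
    exact hG
  · -- assouadSpectrum θ ≤ quasiAssouadDim
    have h1 : ∀ θ'' ∈ Set.Ioo θ (1:ℝ), assouadSpectrum θ F ≤ upperSpectrum θ'' F := by
      intro θ'' hθ''
      have hθ''Ioo : θ'' ∈ Set.Ioo (0:ℝ) 1 := ⟨lt_trans hθ0 hθ''.1, hθ''.2⟩
      calc assouadSpectrum θ F ≤ upperSpectrum θ F := by
            rw [assouadSpectrum_eq_sInf, upperSpectrum_eq_sInf]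
            exact csInf_le_csInf (ASet_bddBelow θ F) (hUne θ hθIoo) (USet_subset_ASet hθIoo F)
        _ ≤ upperSpectrum θ'' F := by
            rw [upperSpectrum_eq_sInf, upperSpectrum_eq_sInf]
            exact csInf_le_csInf (USet_bddBelow θ F) (hUne θ'' hθ''Ioo)
              (USet_antitone hθIoo hθ''Ioo hθ''.1.le F)
    have hev : ∀ᶠ θ'' in 𝓝[<] (1:ℝ), assouadSpectrum θ F ≤ upperSpectrum θ'' F := by
      filter_upwards [Ioo_mem_nhdsLT_of_mem
        (⟨hθ1, le_refl (1:ℝ)⟩ : (1:ℝ) ∈ Set.Ioc θ 1)] with τ' hτ'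
      exact h1 τ' hτ'
    have hbdd : IsBoundedUnder (· ≤ ·) (𝓝[<] (1:ℝ)) (fun τ' => upperSpectrum τ' F) := by
      refine ⟨(d:ℝ), ?_⟩
      rw [eventually_map]
      filter_upwards [Ioo_mem_nhdsLT_of_mem
        (⟨zero_lt_one, le_refl (1:ℝ)⟩ : (1:ℝ) ∈ Set.Ioc (0:ℝ) 1)] with τ' hτ'
      rw [upperSpectrum_eq_sInf]
      exact csInf_le (USet_bddBelow τ' F) (d_mem_USet hτ' F)
    exact le_limsup_of_frequently_le hev.frequently hbdd

end MainProof

/-- For `θ ∈ (0,1)` and `F ⊆ ℝ^d`: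
`\overline{dim}_{GB} F ≤ dim_A^θ F ≤ min (\overline{dim}_{GB} F / (1-θ)) (dim_{qA} F)`. -/
theorem genUpperBoxDim_le_assouadSpectrum_le_min
    (d : ℕ) (θ : ℝ) (hθ : θ ∈ Set.Ioo (0 : ℝ) 1) (F : Set (EuclideanSpace ℝ (Fin d))) :
    genUpperBoxDim F ≤ assouadSpectrum θ F ∧
      assouadSpectrum θ F ≤ min (genUpperBoxDim F / (1 - θ)) (quasiAssouadDim F) := by
  exact genUpperBoxDim_le_assouadSpectrum_le_min' θ hθ F

end
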